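/- Dominance lemma: For any fair asynchronous activation sequence starting from the all-empty configuration on a path of k particles (with asynchronous capacity κ and parallel capacity κ' = κ − α), letting C_i^A denote the asynchronous configuration after round i and C_i the greedy parallel configuration after round i, we have for every i and every index j that the suffix sum Σ_{ℓ≥j} C_i^A(P_ℓ) ≥ Σ_{ℓ≥j} C_i(P_ℓ). -/

import Mathlib

open scoped Classical

/-- Energy received by particle `j` in one greedy parallel round (parallel capacity `κ'`). -/
noncomputable def recvE (α κ' : ℝ) (B : ℕ → ℝ) (j : ℕ) : ℝ :=
  if j = 0 then min α (κ' - B 0)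
  else if α ≤ B (j - 1) ∧ B j < κ' then min α (κ' - B j) else 0

/-- Energy sent by particle `j` to `j+1` in one greedy parallel round. -/
noncomputable def sendE (α κ' : ℝ) (k : ℕ) (B : ℕ → ℝ) (j : ℕ) : ℝ :=
  if j + 1 < k then recvE α κ' B (j + 1) else 0

/-- One greedy parallel round of the energy schedule on a path of `k` particles. -/
noncomputable def stepE (α κ' : ℝ) (k : ℕ) (B : ℕ → ℝ) : ℕ → ℝ :=
  fun j => B j + recvE α κ' B j - sendE α κ' k B j

/-- Asynchronous activation of particle `j` (capacity `κ`): if `j = 0` it first harvests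
`min α (κ - bat)` from the external source; then, if `j+1 < k`, `bat(P_j) ≥ α` and
`bat(P_{j+1}) < κ`, it transfers `min (α, κ - bat(P_{j+1}))` to `P_{j+1}`. -/
noncomputable def actA (κ α : ℝ) (k : ℕ) (j : ℕ) (C : ℕ → ℝ) : ℕ → ℝ :=
  let C1 : ℕ → ℝ := fun i => if j = 0 ∧ i = 0 then min (C 0 + α) κ else C i
  if j + 1 < k ∧ α ≤ C1 j ∧ C1 (j + 1) < κ then
    fun i =>
      if i = j then C1 j - min α (κ - C1 (j + 1))
      else if i = j + 1 then C1 (j + 1) + min α (κ - C1 (j + 1))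
      else C1 i
  else C1

/-- One asynchronous round: the particles listed in `L` are activated in order. -/
noncomputable def roundA (κ α : ℝ) (k : ℕ) (L : List ℕ) (C : ℕ → ℝ) : ℕ → ℝ :=
  L.foldl (fun C j => actA κ α k j C) C

/-- The asynchronous configuration after `t` rounds, starting from all batteries empty,
where `rounds t` lists the activations of asynchronous round `t`. -/
noncomputable def asyncCfg (κ α : ℝ) (k : ℕ) (rounds : ℕ → List ℕ) : ℕ → ℕ → ℝ
  | 0 => fun _ => 0
  | t + 1 => roundA κ α k (rounds t) (asyncCfg κ α k rounds t)

set_option linter.unusedVariables false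

namespace AsyncDom

noncomputable def Ssum (k j : ℕ) (C : ℕ → ℝ) : ℝ := ∑ ℓ ∈ Finset.Ico j k, C ℓ

/-- Invariant: every battery is a multiple of α, between 0 and N·α. -/
def InvC (N : ℕ) (α : ℝ) (C : ℕ → ℝ) : Prop := ∀ i, ∃ n : ℕ, n ≤ N ∧ C i = n * α

lemma InvC.nonneg {N α C} (hα : 0 < α) (h : InvC N α C) (i : ℕ) : 0 ≤ C i := by
  obtain ⟨n, _, e⟩ := h i; rw [e]; positivity

lemma InvC.le_kappa {N : ℕ} {κ α : ℝ} {C} (hα : 0 < α) (hκ : κ = (N:ℝ) * α)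
    (h : InvC N α C) (i : ℕ) : C i ≤ κ := by
  obtain ⟨n, hn, e⟩ := h i
  rw [e, hκ]
  have : (n:ℝ) ≤ (N:ℝ) := by exact_mod_cast hn
  nlinarith

lemma sum_ite_update (s : Finset ℕ) (C : ℕ → ℝ) (p : ℕ) (x : ℝ) :
    ∑ i ∈ s, (if i = p then x else C i) = (∑ i ∈ s, C i) + (if p ∈ s then x - C p else 0) := by
  by_cases hp : p ∈ s
  · rw [if_pos hp, ← Finset.sum_erase_add _ _ hp, ← Finset.sum_erase_add _ C hp,
      Finset.sum_congr rfl (fun i hi => if_neg (Finset.ne_of_mem_erase hi))]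
    simp
  · rw [if_neg hp, add_zero]
    exact Finset.sum_congr rfl fun i hi => if_neg (by rintro rfl; exact hp hi)

lemma Ssum_actA (κ α : ℝ) (k : ℕ) (hk : 0 < k) (C : ℕ → ℝ) (m j : ℕ) :
    Ssum k j (actA κ α k m C) = Ssum k j C
      + (if m = 0 ∧ j = 0 then min (C 0 + α) κ - C 0 else 0)
      + (if (m + 1 < k ∧ α ≤ (if m = 0 then min (C 0 + α) κ else C m) ∧ C (m + 1) < κ) ∧ j = m + 1
          then min α (κ - C (m + 1)) else 0) := by
  classical
  set C1 : ℕ → ℝ := fun i => if m = 0 ∧ i = 0 then min (C 0 + α) κ else C i with hC1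
  have hC1m1 : C1 (m + 1) = C (m + 1) := by
    simp only [hC1]; exact if_neg (by omega)
  have hC1m : C1 m = (if m = 0 then min (C 0 + α) κ else C m) := by
    by_cases h : m = 0 <;> simp [hC1, h]
  have hSC1 : Ssum k j C1 = Ssum k j C + (if m = 0 ∧ j = 0 then min (C 0 + α) κ - C 0 else 0) := by
    by_cases hm : m = 0
    · subst hm
      have he : C1 = fun i => if i = 0 then min (C 0 + α) κ else C i := by
        funext i; simp [hC1]
      rw [he, Ssum, sum_ite_update, ← Ssum]
      have h0 : (0 ∈ Finset.Ico j k) ↔ j = 0 := by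
        simp only [Finset.mem_Ico]; omega
      by_cases hj : j = 0
      · rw [if_pos (h0.2 hj), if_pos ⟨rfl, hj⟩]
      · rw [if_neg (fun h => hj (h0.1 h)), if_neg (by simp [hj])]
    · have he : C1 = C := by funext i; simp [hC1, hm]
      rw [he, if_neg (by simp [hm]), add_zero]
  have hact : actA κ α k m C = if m + 1 < k ∧ α ≤ C1 m ∧ C1 (m + 1) < κ then
      (fun i =>
        if i = m then C1 m - min α (κ - C1 (m + 1))
        else if i = m + 1 then C1 (m + 1) + min α (κ - C1 (m + 1))
        else C1 i)
      else C1 := rfl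
  by_cases hg : m + 1 < k ∧ α ≤ C1 m ∧ C1 (m + 1) < κ
  · rw [hact, if_pos hg]
    set t := min α (κ - C1 (m + 1)) with ht
    have hgoalcond : (m + 1 < k ∧ α ≤ (if m = 0 then min (C 0 + α) κ else C m) ∧ C (m + 1) < κ) := by
      rw [← hC1m, ← hC1m1]; exact hg
    set g : ℕ → ℝ := fun i => if i = m + 1 then C1 (m + 1) + t else C1 i with hgdef
    have h1 : Ssum k j (fun i => if i = m then C1 m - t else g i)
        = Ssum k j g + (if m ∈ Finset.Ico j k then (C1 m - t) - g m else 0) := by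
      rw [Ssum, sum_ite_update, ← Ssum]
    have hgm : g m = C1 m := by simp only [hgdef]; exact if_neg (by omega)
    have h2 : Ssum k j g = Ssum k j C1 + (if m + 1 ∈ Finset.Ico j k then t else 0) := by
      rw [hgdef, Ssum, sum_ite_update, ← Ssum]
      congr 1
      split_ifs <;> ring
    have heq : (fun i => if i = m then C1 m - t else g i)
        = (fun i =>
          if i = m then C1 m - min α (κ - C1 (m + 1))
          else if i = m + 1 then C1 (m + 1) + min α (κ - C1 (m + 1))
          else C1 i) := rfl
    have ht' : t = min α (κ - C (m + 1)) := by rw [ht, hC1m1]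
    rw [← heq, h1, hgm, h2, hSC1, ht']
    have hmk : m < k := by omega
    have hA : (m ∈ Finset.Ico j k) = (j ≤ m) := by simp [Finset.mem_Ico, hmk]
    have hB : (m + 1 ∈ Finset.Ico j k) = (j ≤ m + 1) := by simp [Finset.mem_Ico, hg.1]
    simp only [hA, hB]
    have hGneg : ∀ (_ : ¬ j = m + 1),
        (if (m + 1 < k ∧ α ≤ (if m = 0 then min (C 0 + α) κ else C m) ∧ C (m + 1) < κ) ∧ j = m + 1
          then min α (κ - C (m + 1)) else 0) = 0 := fun hne => if_neg (fun h => hne h.2)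
    have hGpos : ∀ (_ : j = m + 1),
        (if (m + 1 < k ∧ α ≤ (if m = 0 then min (C 0 + α) κ else C m) ∧ C (m + 1) < κ) ∧ j = m + 1
          then min α (κ - C (m + 1)) else 0) = min α (κ - C (m + 1)) :=
      fun hje => if_pos ⟨hgoalcond, hje⟩
    by_cases hjm : j ≤ m
    · rw [if_pos hjm, if_pos (by omega : j ≤ m + 1), hGneg (by omega)]
      ring
    · by_cases hje : j = m + 1
      · rw [if_pos (by omega : j ≤ m + 1), if_neg hjm, hGpos hje]
        ring
      · rw [if_neg hjm, if_neg (by omega : ¬ j ≤ m + 1), hGneg hje]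
        ring
  · rw [hact, if_neg hg, hSC1]
    have hGzero :
        (if (m + 1 < k ∧ α ≤ (if m = 0 then min (C 0 + α) κ else C m) ∧ C (m + 1) < κ) ∧ j = m + 1
          then min α (κ - C (m + 1)) else 0) = 0 :=
      if_neg (fun h => hg (by rw [hC1m, hC1m1]; exact h.1))
    rw [hGzero]
    ring

lemma Ssum_le_actA {κ α : ℝ} {k : ℕ} (hk : 0 < k) (hα : 0 < α) (C : ℕ → ℝ)
    (hC0 : C 0 ≤ κ) (m j : ℕ) : Ssum k j C ≤ Ssum k j (actA κ α k m C) := by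
  rw [Ssum_actA κ α k hk]
  have h1 : (0:ℝ) ≤ if m = 0 ∧ j = 0 then min (C 0 + α) κ - C 0 else 0 := by
    split_ifs
    · have := le_min (by linarith : C 0 ≤ C 0 + α) hC0; linarith
    · exact le_refl _
  have h2 : (0:ℝ) ≤ if (m + 1 < k ∧ α ≤ (if m = 0 then min (C 0 + α) κ else C m) ∧ C (m + 1) < κ) ∧ j = m + 1
      then min α (κ - C (m + 1)) else 0 := by
    by_cases h : (m + 1 < k ∧ α ≤ (if m = 0 then min (C 0 + α) κ else C m) ∧ C (m + 1) < κ) ∧ j = m + 1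
    · rw [if_pos h]
      exact le_min hα.le (by linarith [h.1.2.2])
    · rw [if_neg h]
  linarith

lemma InvC_actA {N : ℕ} {κ α : ℝ} {k : ℕ} (hα : 0 < α) (hκ : κ = (N:ℝ) * α)
    (hN : 1 ≤ N) {C : ℕ → ℝ} (hInv : InvC N α C) (m : ℕ) :
    InvC N α (actA κ α k m C) := by
  classical
  set C1 : ℕ → ℝ := fun i => if m = 0 ∧ i = 0 then min (C 0 + α) κ else C i with hC1
  have hInv1 : InvC N α C1 := by
    intro i
    by_cases h : m = 0 ∧ i = 0
    · obtain ⟨n, hn, e⟩ := hInv 0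
      refine ⟨min (n + 1) N, by omega, ?_⟩
      simp only [hC1, if_pos h, e, hκ]
      rw [Nat.cast_min, min_mul_of_nonneg _ _ hα.le]
      push_cast
      ring_nf
    · simpa [hC1, if_neg h] using hInv i
  have hact : actA κ α k m C = if m + 1 < k ∧ α ≤ C1 m ∧ C1 (m + 1) < κ then
      (fun i =>
        if i = m then C1 m - min α (κ - C1 (m + 1))
        else if i = m + 1 then C1 (m + 1) + min α (κ - C1 (m + 1))
        else C1 i)
      else C1 := rfl
  rw [hact]
  split_ifs with hg
  · obtain ⟨b, hb, eb⟩ := hInv1 (m + 1)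
    have hbN : b < N := by
      have h2 := hg.2.2
      rw [eb, hκ] at h2
      have : (b:ℝ) < (N:ℝ) := lt_of_mul_lt_mul_right h2 hα.le
      exact_mod_cast this
    have ht : min α (κ - C1 (m + 1)) = α := by
      apply min_eq_left
      rw [eb, hκ]
      have : (b:ℝ) + 1 ≤ (N:ℝ) := by exact_mod_cast hbN
      nlinarith
    intro i
    by_cases h1 : i = m
    · obtain ⟨a, ha, ea⟩ := hInv1 m
      have ha1 : 1 ≤ a := by
        by_contra hc
        have : a = 0 := by omega
        rw [this] at ea
        have := hg.2.1
        rw [ea] at this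
        simp at this
        linarith
      refine ⟨a - 1, by omega, ?_⟩
      have hv : (fun i => if i = m then C1 m - min α (κ - C1 (m + 1))
          else if i = m + 1 then C1 (m + 1) + min α (κ - C1 (m + 1)) else C1 i) i
          = C1 m - min α (κ - C1 (m + 1)) := by simp [h1]
      rw [hv, ht, ea, Nat.cast_sub ha1]
      push_cast
      ring
    · by_cases h2 : i = m + 1
      · refine ⟨b + 1, by omega, ?_⟩
        have hv : (fun i => if i = m then C1 m - min α (κ - C1 (m + 1))
            else if i = m + 1 then C1 (m + 1) + min α (κ - C1 (m + 1)) else C1 i) i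
            = C1 (m + 1) + min α (κ - C1 (m + 1)) := by simp [h1, h2]
        rw [hv, ht, eb]
        push_cast
        ring
      · have hv : (fun i => if i = m then C1 m - min α (κ - C1 (m + 1))
            else if i = m + 1 then C1 (m + 1) + min α (κ - C1 (m + 1)) else C1 i) i
            = C1 i := by simp [h1, h2]
        rw [hv]
        exact hInv1 i
  · exact hInv1

lemma InvC_roundA {N : ℕ} {κ α : ℝ} {k : ℕ} (hα : 0 < α) (hκ : κ = (N:ℝ) * α)
    (hN : 1 ≤ N) :
    ∀ (L : List ℕ) (C : ℕ → ℝ), InvC N α C → InvC N α (roundA κ α k L C)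
  | [], C, h => h
  | a :: L, C, h => by
    have : roundA κ α k (a :: L) C = roundA κ α k L (actA κ α k a C) := by
      simp [roundA]
    rw [this]
    exact InvC_roundA hα hκ hN L _ (InvC_actA hα hκ hN h a)

lemma Ssum_le_roundA {N : ℕ} {κ α : ℝ} {k : ℕ} (hk : 0 < k) (hα : 0 < α)
    (hκ : κ = (N:ℝ) * α) (hN : 1 ≤ N) :
    ∀ (L : List ℕ) (C : ℕ → ℝ), InvC N α C → ∀ j,
      Ssum k j C ≤ Ssum k j (roundA κ α k L C)
  | [], C, h, j => le_refl _
  | a :: L, C, h, j => by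
    have he : roundA κ α k (a :: L) C = roundA κ α k L (actA κ α k a C) := by
      simp [roundA]
    rw [he]
    calc Ssum k j C ≤ Ssum k j (actA κ α k a C) :=
          Ssum_le_actA hk hα C (h.le_kappa hα hκ 0) a j
      _ ≤ _ := Ssum_le_roundA hk hα hκ hN L _ (InvC_actA hα hκ hN h a) j

lemma key_roundA {N : ℕ} {κ α : ℝ} {k : ℕ} (hk : 0 < k) (hα : 0 < α)
    (hκ : κ = (N:ℝ) * α) (hN : 1 ≤ N) (m : ℕ) (T : ℝ) (j : ℕ) :
    ∀ (L : List ℕ) (C : ℕ → ℝ), m ∈ L → InvC N α C →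
      (∀ C', InvC N α C' → (∀ j', Ssum k j' C ≤ Ssum k j' C') →
        T ≤ Ssum k j (actA κ α k m C')) →
      T ≤ Ssum k j (roundA κ α k L C)
  | [], C, hm, _, _ => absurd hm List.not_mem_nil
  | a :: L, C, hm, hInv, H => by
    have he : roundA κ α k (a :: L) C = roundA κ α k L (actA κ α k a C) := by
      simp [roundA]
    rw [he]
    rcases List.mem_cons.1 hm with rfl | hm'
    · calc T ≤ Ssum k j (actA κ α k m C) := H C hInv (fun j' => le_refl _)
        _ ≤ _ := Ssum_le_roundA hk hα hκ hN L _ (InvC_actA hα hκ hN hInv m) j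
    · exact key_roundA hk hα hκ hN m T j L (actA κ α k a C) hm'
        (InvC_actA hα hκ hN hInv a)
        (fun C' hI hD => H C' hI (fun j' =>
          (Ssum_le_actA hk hα C (hInv.le_kappa hα hκ 0) a j').trans (hD j')))

lemma Ssum_stepE (α κ' : ℝ) (k : ℕ) (B : ℕ → ℝ) :
    ∀ (d j : ℕ), j + d + 1 = k →
      Ssum k j (stepE α κ' k B) = Ssum k j B + recvE α κ' B j := by
  intro d
  induction d with
  | zero =>
    intro j hj
    have hkj : k = j + 1 := by omega
    subst hkj
    have hIco : Finset.Ico j (j + 1) = {j} := by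
      ext x; simp [Finset.mem_Ico, Nat.lt_succ_iff, Nat.le_antisymm_iff, and_comm]
    simp only [Ssum, hIco, Finset.sum_singleton, stepE, sendE]
    rw [if_neg (by omega : ¬ j + 1 < j + 1)]
    ring
  | succ d ih =>
    intro j hj
    have hjk : j < k := by omega
    have h1 : (j + 1) + d + 1 = k := by omega
    have e1 : Ssum k j (stepE α κ' k B)
        = stepE α κ' k B j + Ssum k (j + 1) (stepE α κ' k B) :=
      Finset.sum_eq_sum_Ico_succ_bot hjk _
    have e2 : Ssum k j B = B j + Ssum k (j + 1) B :=
      Finset.sum_eq_sum_Ico_succ_bot hjk _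
    have e3 := ih (j + 1) h1
    have e4 : stepE α κ' k B j = B j + recvE α κ' B j - recvE α κ' B (j + 1) := by
      simp only [stepE, sendE]
      rw [if_pos (by omega : j + 1 < k)]
    rw [e1, e2, e3, e4]
    ring

end AsyncDom

open AsyncDom in
/-- Dominance lemma: For any fair asynchronous activation sequence (every
particle activated at least once per round) on a path of `k` particles with capacity
`κ = N·α`, starting from the all-empty configuration, the asynchronous configuration after
round `i` dominates the greedy parallel configuration (with capacity `κ' = κ - α`) after
round `i`: every suffix sum of batteries in the asynchronous configuration is at least the
corresponding suffix sum in the parallel configuration. -/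
theorem async_dominates_parallel (k N : ℕ) (κ α : ℝ)
    (hα : 0 < α) (hκ : κ = (N : ℝ) * α) (hN : 1 ≤ N) (hk : 0 < k)
    (rounds : ℕ → List ℕ) (hfair : ∀ t, ∀ j < k, j ∈ rounds t) :
    ∀ (i j : ℕ),
      (∑ ℓ ∈ Finset.Ico j k, ((stepE α (κ - α) k)^[i] (fun _ => 0)) ℓ) ≤
        ∑ ℓ ∈ Finset.Ico j k, asyncCfg κ α k rounds i ℓ := by
  classical
  have hN1 : (1:ℝ) ≤ (N:ℝ) := by exact_mod_cast hN
  have hακ : α ≤ κ := by rw [hκ]; nlinarith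
  suffices h : ∀ i, InvC N α (asyncCfg κ α k rounds i) ∧
      ∀ j, Ssum k j ((stepE α (κ - α) k)^[i] (fun _ => 0)) ≤
        Ssum k j (asyncCfg κ α k rounds i) by
    intro i j
    exact (h i).2 j
  intro i
  induction i with
  | zero =>
    refine ⟨fun i => ⟨0, Nat.zero_le _, by simp [asyncCfg]⟩, fun j => ?_⟩
    rw [Function.iterate_zero_apply]
    exact le_of_eq rfl
  | succ i ih =>
    obtain ⟨hInv, hdom⟩ := ih
    have hcfg : asyncCfg κ α k rounds (i + 1)
        = roundA κ α k (rounds i) (asyncCfg κ α k rounds i) := rfl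
    have hInv' : InvC N α (asyncCfg κ α k rounds (i + 1)) := by
      rw [hcfg]; exact InvC_roundA hα hκ hN _ _ hInv
    refine ⟨hInv', fun j => ?_⟩
    by_cases hjk : j < k
    · set B := (stepE α (κ - α) k)^[i] (fun _ => 0) with hB
      set A := asyncCfg κ α k rounds i with hA
      have hstep : Ssum k j ((stepE α (κ - α) k)^[i+1] (fun _ => 0))
          = Ssum k j B + recvE α (κ - α) B j := by
        rw [Function.iterate_succ_apply']
        exact Ssum_stepE α (κ - α) k B (k - j - 1) j (by omega)
      rw [hstep, hcfg]
      set r := recvE α (κ - α) B j with hr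
      by_cases hrpos : 0 < r
      · rcases Nat.eq_zero_or_pos j with rfl | hj1
        · -- j = 0 : the root harvests
          have hrdef : r = min α (κ - α - B 0) := by rw [hr, recvE, if_pos rfl]
          have hrα : r ≤ α := hrdef ▸ min_le_left _ _
          have hrB : r ≤ κ - α - B 0 := hrdef ▸ min_le_right _ _
          refine key_roundA hk hα hκ hN 0 _ 0 (rounds i) A (hfair i 0 hk) hInv ?_
          intro C' hIC' hDC'
          have hDB : ∀ j', Ssum k j' B ≤ Ssum k j' C' :=
            fun j' => (hdom j').trans (hDC' j')
          rw [Ssum_actA κ α k hk]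
          have hlast : (if ((0:ℕ) + 1 < k ∧ α ≤ (if (0:ℕ) = 0 then min (C' 0 + α) κ else C' 0)
              ∧ C' (0 + 1) < κ) ∧ (0:ℕ) = 0 + 1 then min α (κ - C' (0 + 1)) else 0) = 0 :=
            if_neg (fun h => by omega)
          rw [hlast, if_pos ⟨rfl, rfl⟩, add_zero]
          by_cases hful : C' 0 ≤ κ - α
          · have hmin : min (C' 0 + α) κ = C' 0 + α := min_eq_left (by linarith)
            have := hDB 0
            rw [hmin]
            linarith
          · push_neg at hful
            have h0κ : C' 0 ≤ κ := hIC'.le_kappa hα hκ 0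
            have hmin : C' 0 ≤ min (C' 0 + α) κ := le_min (by linarith) h0κ
            have hs1 : Ssum k 0 C' = C' 0 + Ssum k 1 C' :=
              Finset.sum_eq_sum_Ico_succ_bot hk _
            have hs2 : Ssum k 0 B = B 0 + Ssum k 1 B :=
              Finset.sum_eq_sum_Ico_succ_bot hk _
            have := hDB 1
            rw [hs1, hs2]
            linarith
        · -- j ≥ 1 : particle j-1 sends to j
          have hrdef : r = if α ≤ B (j - 1) ∧ B j < κ - α
              then min α (κ - α - B j) else 0 := by
            rw [hr, recvE, if_neg (by omega : ¬ j = 0)]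
          have hcond : α ≤ B (j - 1) ∧ B j < κ - α := by
            by_contra hc
            rw [hrdef, if_neg hc] at hrpos
            exact lt_irrefl 0 hrpos
          have hrval : r = min α (κ - α - B j) := by rw [hrdef, if_pos hcond]
          have hrα : r ≤ α := hrval ▸ min_le_left _ _
          have hrB : r ≤ κ - α - B j := hrval ▸ min_le_right _ _
          have hm1 : j - 1 + 1 = j := by omega
          refine key_roundA hk hα hκ hN (j - 1) _ j (rounds i) A
            (hfair i (j - 1) (by omega)) hInv ?_
          intro C' hIC' hDC'
          have hDB : ∀ j', Ssum k j' B ≤ Ssum k j' C' :=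
            fun j' => (hdom j').trans (hDC' j')
          rw [Ssum_actA κ α k hk, hm1]
          rw [if_neg (by omega : ¬ (j - 1 = 0 ∧ j = 0)), add_zero]
          set c1 : ℝ := if j - 1 = 0 then min (C' 0 + α) κ else C' (j - 1) with hc1
          by_cases hful : κ - α < C' j
          · have htr : (0:ℝ) ≤ if (j < k ∧ α ≤ c1 ∧ C' j < κ) ∧ j = j
                then min α (κ - C' j) else 0 := by
              split_ifs with h
              · exact le_min hα.le (by linarith [h.1.2.2])
              · exact le_refl _
            have hs1 : Ssum k j C' = C' j + Ssum k (j + 1) C' :=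
              Finset.sum_eq_sum_Ico_succ_bot hjk _
            have hs2 : Ssum k j B = B j + Ssum k (j + 1) B :=
              Finset.sum_eq_sum_Ico_succ_bot hjk _
            have := hDB (j + 1)
            rw [hs1, hs2]
            linarith
          · push_neg at hful
            have hjκ : C' j < κ := by linarith
            by_cases hsend : α ≤ c1
            · rw [if_pos ⟨⟨hjk, hsend, hjκ⟩, rfl⟩]
              have hmin : min α (κ - C' j) = α := min_eq_left (by linarith)
              have := hDB j
              rw [hmin]
              linarith
            · push_neg at hsend
              have hj2 : j - 1 ≠ 0 := by
                intro h0
                rw [hc1, if_pos h0] at hsend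
                have h00 : 0 ≤ C' 0 := hIC'.nonneg hα 0
                have : α ≤ min (C' 0 + α) κ := le_min (by linarith) hακ
                linarith
              rw [hc1, if_neg hj2] at hsend
              have hz : C' (j - 1) = 0 := by
                obtain ⟨n, hn, e⟩ := hIC' (j - 1)
                rcases Nat.eq_zero_or_pos n with rfl | hn1
                · simpa using e
                · exfalso
                  have : (1:ℝ) ≤ (n:ℝ) := by exact_mod_cast hn1
                  rw [e] at hsend
                  nlinarith
              have hsend' : ¬ α ≤ c1 := by
                rw [hc1, if_neg hj2]; exact not_le.2 hsend
              rw [if_neg (fun h => hsend' h.1.2.1), add_zero]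
              have hjm1k : j - 1 < k := by omega
              have hs1 : Ssum k (j - 1) C' = C' (j - 1) + Ssum k (j - 1 + 1) C' :=
                Finset.sum_eq_sum_Ico_succ_bot hjm1k _
              have hs2 : Ssum k (j - 1) B = B (j - 1) + Ssum k (j - 1 + 1) B :=
                Finset.sum_eq_sum_Ico_succ_bot hjm1k _
              rw [hm1] at hs1 hs2
              have := hDB (j - 1)
              rw [hs1, hs2] at this
              linarith [hcond.1, hz]
      · push_neg at hrpos
        have h1 : Ssum k j A ≤ Ssum k j (roundA κ α k (rounds i) A) :=
          Ssum_le_roundA hk hα hκ hN _ _ hInv j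
        have := hdom j
        linarith
    · have hIe : Finset.Ico j k = ∅ := Finset.Ico_eq_empty (by omega)
      simp [Ssum, hIe]
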